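/- If F is a rare non-principal filter on ℕ, then player ONE does not have a winning strategy in the game G2(F); consequently, since TWO never has a winning strategy, G2(F) is undetermined. -/

import Mathlib

open Filter Set

/-- A strategy: maps finite sequences of the opponent's moves to a natural number. -/
abbrev Strat := List ℕ → ℕ

/-- TWO's move in inning `k` (0-indexed) when following strategy `σ` against ONE's
moves `m`: TWO has seen `m 0, …, m k`. -/
def twoFollow (σ : Strat) (m : ℕ → ℕ) (k : ℕ) : ℕ :=
  σ (List.ofFn fun i : Fin (k + 1) => m i)

/-- ONE's move in inning `k` when following strategy `σ` against TWO's moves `n`: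
ONE's move depends on `n 0, …, n (k-1)` (the first move is `σ []`). -/
def oneFollow (σ : Strat) (n : ℕ → ℕ) (k : ℕ) : ℕ :=
  σ (List.ofFn fun i : Fin k => n i)

/-- TWO wins the play `(m 0, n 0, m 1, n 1, …)` of the game `G1(F)`. -/
def TwoWins1 (F : Set (Set ℕ)) (m n : ℕ → ℕ) : Prop :=
  StrictMono n ∧ (∀ N : ℕ, ∃ k, N ≤ k ∧ m k < n k) ∧ Set.range n ∈ F

/-- TWO wins the play `(m 0, n 0, m 1, n 1, …)` of the game `G2(F)`. -/
def TwoWins2 (F : Set (Set ℕ)) (m n : ℕ → ℕ) : Prop :=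
  (∀ᶠ k in Filter.atTop, m k < n k) ∧ Set.range n ∈ F

/-- `σ` is a winning strategy for TWO in `G1(F)`. -/
def TwoWinning1 (F : Set (Set ℕ)) (σ : Strat) : Prop :=
  ∀ m : ℕ → ℕ, TwoWins1 F m (twoFollow σ m)

/-- `σ` is a winning strategy for ONE in `G1(F)`. -/
def OneWinning1 (F : Set (Set ℕ)) (σ : Strat) : Prop :=
  ∀ n : ℕ → ℕ, ¬ TwoWins1 F (oneFollow σ n) n

/-- `σ` is a winning strategy for TWO in `G2(F)`. -/
def TwoWinning2 (F : Set (Set ℕ)) (σ : Strat) : Prop :=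
  ∀ m : ℕ → ℕ, TwoWins2 F m (twoFollow σ m)

/-- `σ` is a winning strategy for ONE in `G2(F)`. -/
def OneWinning2 (F : Set (Set ℕ)) (σ : Strat) : Prop :=
  ∀ n : ℕ → ℕ, ¬ TwoWins2 F (oneFollow σ n) n

/-- `F` is a non-principal filter on `ℕ`: upward closed, closed under finite
intersections, and every member is infinite. -/
def IsNPFilter (F : Set (Set ℕ)) : Prop :=
  (∀ X ∈ F, ∀ Y : Set ℕ, X ⊆ Y → Y ∈ F) ∧
  (∀ X ∈ F, ∀ Y ∈ F, X ∩ Y ∈ F) ∧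
  (∀ X ∈ F, X.Infinite)

/-- `F` is a rare filter: every partition of `ℕ` into disjoint (nonempty) finite sets
admits a selector in `F`. -/
def IsRare (F : Set (Set ℕ)) : Prop :=
  ∀ I : ℕ → Set ℕ, (∀ n, (I n).Finite) → (∀ n, (I n).Nonempty) →
    (Pairwise fun i j => Disjoint (I i) (I j)) → (⋃ n, I n) = Set.univ →
    ∃ X ∈ F, ∀ n, (X ∩ I n).Subsingleton

/-- The subset of Cantor space `2^ℕ` corresponding to the filter `F`. -/
def cantorCoded (F : Set (Set ℕ)) : Set (ℕ → Bool) :=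
  {χ | {n | χ n = true} ∈ F}

/-- The increasing enumeration of `X ⊆ ℕ`. -/
noncomputable def enum (X : Set ℕ) : ℕ → ℕ := Nat.nth (· ∈ X)

/-- `g` eventually dominates `f`. -/
def EvDom (g f : ℕ → ℕ) : Prop := ∀ᶠ k in Filter.atTop, f k < g k

/- ===== auxiliary machinery ===== -/

/-- Bound on the values of `σ` over lists of length at most `L` with entries at most `a`. -/
def bnd (σ : Strat) (a L : ℕ) : ℕ :=
  Finset.sup (Finset.range (L+1)) fun m =>
    Finset.sup (Finset.univ : Finset (Fin m → Fin (a+1))) fun f =>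
      σ (List.ofFn fun i => (f i : ℕ))

lemma bnd_spec (σ : Strat) (a L : ℕ) (l : List ℕ) (hl : l.length ≤ L)
    (he : ∀ x ∈ l, x ≤ a) : σ l ≤ bnd σ a L := by
  have hm : l.length ∈ Finset.range (L+1) := by simp; omega
  refine le_trans ?_ (Finset.le_sup hm)
  have hf : ∀ i : Fin l.length, l.get i < a + 1 := by
    intro i
    have := he (l.get i) (List.get_mem l i)
    omega
  set f : Fin l.length → Fin (a+1) := fun i => ⟨l.get i, hf i⟩ with hfdef
  have hlof : (List.ofFn fun i => ((f i : ℕ))) = l := by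
    simp [hfdef, List.ofFn_get]
  have hle := Finset.le_sup (s := (Finset.univ : Finset (Fin l.length → Fin (a+1))))
    (f := fun g => σ (List.ofFn fun i => ((g i : ℕ)))) (Finset.mem_univ f)
  simpa [hlof] using hle

lemma ofFn_cast (f : ℕ → ℕ) {n m : ℕ} (h : n = m) :
    (List.ofFn fun i : Fin n => f i) = (List.ofFn fun i : Fin m => f i) := by
  subst h; rfl

/- ===== part 2 : TWO has no winning strategy ===== -/

def mseq (σ : Strat) : ℕ → ℕ
  | 0 => 0
  | (t+1) => mseq σ t + 1 + σ (List.ofFn fun i : Fin (t/2+1) => mseq σ (2*i)) +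
      σ (List.ofFn fun i : Fin ((t+1)/2) => mseq σ (2*i+1))
  termination_by t => t
  decreasing_by
    · omega
    · have := i.isLt; omega
    · have := i.isLt; omega

lemma mseq_lt_succ (σ : Strat) (t : ℕ) : mseq σ t < mseq σ (t+1) := by
  rw [mseq]; omega

lemma mseq_mono (σ : Strat) : StrictMono (mseq σ) :=
  strictMono_nat_of_lt_succ (mseq_lt_succ σ)

lemma mseq_A (σ : Strat) (k : ℕ) :
    σ (List.ofFn fun i : Fin (k+1) => mseq σ (2*i)) < mseq σ (2*k+1) := by
  have h1 : (2*k)/2 + 1 = k + 1 := by omega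
  have hcast : (List.ofFn fun i : Fin ((2*k)/2+1) => mseq σ (2*i)) =
      (List.ofFn fun i : Fin (k+1) => mseq σ (2*i)) := ofFn_cast (fun t => mseq σ (2*t)) h1
  rw [mseq, ← hcast]; omega

lemma mseq_B (σ : Strat) (k : ℕ) :
    σ (List.ofFn fun i : Fin (k+1) => mseq σ (2*i+1)) < mseq σ (2*k+2) := by
  have h1 : (2*k+1+1)/2 = k + 1 := by omega
  have hcast : (List.ofFn fun i : Fin ((2*k+1+1)/2) => mseq σ (2*i+1)) =
      (List.ofFn fun i : Fin (k+1) => mseq σ (2*i+1)) := ofFn_cast (fun t => mseq σ (2*t+1)) h1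
  have e : 2*k+2 = (2*k+1)+1 := by omega
  rw [e, mseq, ← hcast]; omega

theorem noTwoWinning (F : Set (Set ℕ)) (hF : IsNPFilter F) :
    ¬ ∃ σ : Strat, TwoWinning2 F σ := by
  rintro ⟨σ, hσ⟩
  have mono := (mseq_mono σ).monotone
  set a : ℕ → ℕ := fun k => mseq σ (2*k) with ha
  set bb : ℕ → ℕ := fun k => mseq σ (2*k+1) with hbb
  obtain ⟨hAdom, hAF⟩ := hσ a
  obtain ⟨hBdom, hBF⟩ := hσ bb
  obtain ⟨KA, hKA⟩ := Filter.eventually_atTop.1 hAdom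
  obtain ⟨KB, hKB⟩ := Filter.eventually_atTop.1 hBdom
  have hnA : ∀ k, twoFollow σ a k < mseq σ (2*k+1) := fun k => mseq_A σ k
  have hnB : ∀ k, twoFollow σ bb k < mseq σ (2*k+2) := fun k => mseq_B σ k
  have hmemF : Set.range (twoFollow σ a) ∩ Set.range (twoFollow σ bb) ∈ F :=
    hF.2.1 _ hAF _ hBF
  refine hF.2.2 _ hmemF ?_
  refine Set.Finite.subset
    (Set.Finite.union ((Set.finite_Iio KA).image (twoFollow σ a))
      ((Set.finite_Iio KB).image (twoFollow σ bb))) ?_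
  rintro x ⟨⟨k, hk⟩, ⟨j, hj⟩⟩
  by_cases hkKA : k < KA
  · exact Or.inl ⟨k, hkKA, hk⟩
  by_cases hjKB : j < KB
  · exact Or.inr ⟨j, hjKB, hj⟩
  exfalso
  have h1 : mseq σ (2*k) < x := by
    have := hKA k (le_of_not_gt hkKA); rw [hk] at this; exact this
  have h2 : x < mseq σ (2*k+1) := by rw [← hk]; exact hnA k
  have h3 : mseq σ (2*j+1) < x := by
    have := hKB j (le_of_not_gt hjKB); rw [hj] at this; exact this
  have h4 : x < mseq σ (2*j+2) := by rw [← hj]; exact hnB j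
  rcases le_or_gt (2*k+1) (2*j+1) with hle | hlt
  · have := mono hle; omega
  · have : 2*j+2 ≤ 2*k := by omega
    have := mono this; omega

/- ===== part 1 : ONE has no winning strategy ===== -/

def bseq (σ : Strat) : ℕ → ℕ
  | 0 => 0
  | (j+1) => bseq σ j + 1 + bnd σ (bseq σ j) (j+1)

lemma bseq_lt_succ (σ : Strat) (j : ℕ) : bseq σ j < bseq σ (j+1) := by
  rw [bseq]; omega

lemma bseq_mono (σ : Strat) : Monotone (bseq σ) :=
  (strictMono_nat_of_lt_succ (bseq_lt_succ σ)).monotone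

lemma bseq_spec (σ : Strat) (j : ℕ) (l : List ℕ) (hl : l.length ≤ j+1)
    (he : ∀ x ∈ l, x ≤ bseq σ j) : σ l < bseq σ (j+1) := by
  have := bnd_spec σ (bseq σ j) (j+1) l hl he
  rw [bseq]; omega

lemma cover_lemma (g : ℕ → ℕ) (h0 : g 0 = 0) (hm : ∀ j, g j < g (j+1)) (n : ℕ) :
    ∃ j, g j ≤ n ∧ n < g (j+1) := by
  induction n with
  | zero => exact ⟨0, by omega, by have := hm 0; omega⟩
  | succ n ih =>
    obtain ⟨j, hj1, hj2⟩ := ih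
    by_cases hc : n+1 < g (j+1)
    · exact ⟨j, by omega, hc⟩
    · exact ⟨j+1, by omega, by have := hm (j+1); omega⟩

lemma rare_selector (F : Set (Set ℕ)) (h : IsRare F) (g : ℕ → ℕ)
    (h0 : g 0 = 0) (hm : ∀ j, g j < g (j+1)) :
    ∃ X ∈ F, ∀ q, (X ∩ Set.Ico (g q) (g (q+1))).Subsingleton := by
  have gmono : Monotone g := (strictMono_nat_of_lt_succ hm).monotone
  apply h (fun q => Set.Ico (g q) (g (q+1)))
  · intro q; exact Set.finite_Ico _ _
  · intro q; exact ⟨g q, Set.mem_Ico.2 ⟨le_refl _, hm q⟩⟩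
  · intro i j hij
    refine Set.disjoint_left.2 ?_
    intro x hx1 hx2
    rw [Set.mem_Ico] at hx1 hx2
    rcases Nat.lt_or_ge i j with hlt | hge
    · have := gmono (show i+1 ≤ j by omega); omega
    · have hji : j < i := lt_of_le_of_ne hge (Ne.symm hij)
      have := gmono (show j+1 ≤ i by omega); omega
  · refine Set.eq_univ_iff_forall.2 fun x => Set.mem_iUnion.2 ?_
    obtain ⟨j, hj1, hj2⟩ := cover_lemma g h0 hm x
    exact ⟨j, Set.mem_Ico.2 ⟨hj1, hj2⟩⟩

theorem noOneWinning (F : Set (Set ℕ)) (hF : IsNPFilter F) (h : IsRare F) :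
    ¬ ∃ σ : Strat, OneWinning2 F σ := by
  rintro ⟨σ, hσ⟩
  have hb0 : bseq σ 0 = 0 := rfl
  have hbs := bseq_lt_succ σ
  have hbmono := bseq_mono σ
  -- selector for the "even pairs" partition
  obtain ⟨X0, hX0F, hX0⟩ := rare_selector F h (fun j => bseq σ (2*j)) (by simp [hb0])
    (by intro j
        show bseq σ (2*j) < bseq σ (2*(j+1))
        have e : 2*(j+1) = (2*j+1)+1 := by omega
        rw [e]
        have := hbs (2*j); have := hbs (2*j+1); omega)
  -- selector for the "odd pairs" partition
  obtain ⟨X1, hX1F, hX1⟩ := rare_selector F h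
    (fun j => match j with | 0 => 0 | (q+1) => bseq σ (2*q+1)) rfl
    (by intro j
        match j with
        | 0 => simpa using lt_of_le_of_lt (Nat.zero_le _) (hbs 0)
        | (q+1) =>
          show bseq σ (2*q+1) < bseq σ (2*(q+1)+1)
          exact lt_of_lt_of_le (hbs (2*q+1)) (hbmono (by omega)))
  set X := X0 ∩ X1 with hXdef
  have hXF : X ∈ F := hF.2.1 _ hX0F _ hX1F
  have hXinf : (setOf (· ∈ X)).Infinite := hF.2.2 _ hXF
  set n : ℕ → ℕ := Nat.nth (· ∈ X) with hndef
  have hmemX : ∀ k, n k ∈ X := fun k => Nat.nth_mem_of_infinite hXinf k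
  have hmono : StrictMono n := Nat.nth_strictMono hXinf
  have hrange : Set.range n = X := Nat.range_nth_of_infinite hXinf
  -- block index of each element
  have hblk : ∀ k, ∃ j, bseq σ j ≤ n k ∧ n k < bseq σ (j+1) :=
    fun k => cover_lemma (bseq σ) hb0 hbs (n k)
  choose blk hblk1 hblk2 using hblk
  -- the gap property
  have hgap : ∀ k, blk k + 2 ≤ blk (k+1) := by
    intro k
    have hlt : n k < n (k+1) := hmono (lt_add_one k)
    by_contra hcon
    push_neg at hcon
    have hle : blk k ≤ blk (k+1) := by
      by_contra hgt
      push_neg at hgt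
      have hb := hbmono (show blk (k+1) + 1 ≤ blk k by omega)
      have := hblk2 (k+1); have := hblk1 k; omega
    -- both points lie in Ico (bseq σ (blk k)) (bseq σ (blk k + 2))
    have hlo1 : bseq σ (blk k) ≤ n k := hblk1 k
    have hlo2 : bseq σ (blk k) ≤ n (k+1) := le_trans hlo1 hlt.le
    have hhi1 : n k < bseq σ (blk k + 2) :=
      lt_of_lt_of_le (hblk2 k) (hbmono (by omega))
    have hhi2 : n (k+1) < bseq σ (blk k + 2) :=
      lt_of_lt_of_le (hblk2 (k+1)) (hbmono (by omega))
    rcases Nat.even_or_odd (blk k) with ⟨q, hq⟩ | ⟨q, hq⟩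
    · -- blk k = 2q : use X0 with block q
      have heq : n k = n (k+1) := by
        refine hX0 q ⟨(hmemX k).1, ?_⟩ ⟨(hmemX (k+1)).1, ?_⟩ <;>
          refine Set.mem_Ico.2 ⟨?_, ?_⟩
        · simpa [show 2*q = blk k by omega] using hlo1
        · simpa [show 2*(q+1) = blk k + 2 by omega] using hhi1
        · simpa [show 2*q = blk k by omega] using hlo2
        · simpa [show 2*(q+1) = blk k + 2 by omega] using hhi2
      omega
    · -- blk k = 2q+1 : use X1 with block q+1
      have heq : n k = n (k+1) := by
        refine hX1 (q+1) ⟨(hmemX k).2, ?_⟩ ⟨(hmemX (k+1)).2, ?_⟩ <;>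
          refine Set.mem_Ico.2 ⟨?_, ?_⟩
        · show bseq σ (2*q+1) ≤ n k
          simpa [show 2*q+1 = blk k by omega] using hlo1
        · show n k < bseq σ (2*(q+1)+1)
          simpa [show 2*(q+1)+1 = blk k + 2 by omega] using hhi1
        · show bseq σ (2*q+1) ≤ n (k+1)
          simpa [show 2*q+1 = blk k by omega] using hlo2
        · show n (k+1) < bseq σ (2*(q+1)+1)
          simpa [show 2*(q+1)+1 = blk k + 2 by omega] using hhi2
      omega
  have hblk2k : ∀ k, 2*k ≤ blk k := by
    intro k
    induction k with
    | zero => exact Nat.zero_le _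
    | succ k ih => have := hgap k; omega
  -- domination
  have hdom : ∀ k, oneFollow σ n (k+1) < n (k+1) := by
    intro k
    have hlen : (List.ofFn fun i : Fin (k+1) => n i).length ≤ (blk k + 1) + 1 := by
      rw [List.length_ofFn]
      have := hblk2k k; omega
    have hent : ∀ x ∈ (List.ofFn fun i : Fin (k+1) => n i), x ≤ bseq σ (blk k + 1) := by
      intro x hx
      rw [List.mem_ofFn] at hx
      obtain ⟨i, rfl⟩ := hx
      show n (i : ℕ) ≤ bseq σ (blk k + 1)
      have h1 : n (i : ℕ) ≤ n k := hmono.monotone (by have := i.isLt; omega)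
      have := hblk2 k
      omega
    have hσl : σ (List.ofFn fun i : Fin (k+1) => n i) < bseq σ (blk k + 2) :=
      bseq_spec σ (blk k + 1) _ hlen hent
    have : bseq σ (blk k + 2) ≤ n (k+1) :=
      le_trans (hbmono (hgap k)) (hblk1 (k+1))
    calc oneFollow σ n (k+1) = σ (List.ofFn fun i : Fin (k+1) => n i) := rfl
      _ < bseq σ (blk k + 2) := hσl
      _ ≤ n (k+1) := this
  refine hσ n ⟨Filter.eventually_atTop.2 ⟨1, fun k hk => ?_⟩, by rw [hrange]; exact hXF⟩
  obtain ⟨k', rfl⟩ : ∃ k', k = k'+1 := ⟨k-1, by omega⟩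
  exact hdom k'

/-- If `F` is rare then ONE has no winning strategy in `G2(F)`; since TWO never has one,
`G2(F)` is undetermined. -/
theorem stmt6 (F : Set (Set ℕ)) (hF : IsNPFilter F) (h : IsRare F) :
    (¬ ∃ σ : Strat, OneWinning2 F σ) ∧ (¬ ∃ σ : Strat, TwoWinning2 F σ) :=
  ⟨noOneWinning F hF h, noTwoWinning F hF⟩
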